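/- Fix natural numbers a, b, c. The number of chains of type (a,b) of colored integers in {1,...,c} × {red, blue} equals the number of 4-tuples (w, A, B, C) where w is a natural number, A ⊆ {1,...,a} with |A| = w, B ⊆ {1,...,b} with |B| = w, and C ⊆ {1,...,c+w} with |C| = a+b. -/

import Mathlib

open Finset

lemma my_vand2 (m b j : ℕ) :
    ∑ u ∈ range (m+1), m.choose u * b.choose (j+u) = (m+b).choose (m+j) := by
  rw [Nat.add_choose_eq, Finset.Nat.sum_antidiagonal_eq_sum_range_succ_mk]
  rw [← Finset.sum_subset (Finset.range_subset_range.2 (by omega : m+1 ≤ m+j+1))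
      (fun k _ hk => by
        rw [Nat.choose_eq_zero_of_lt (by simpa using hk : m < k), zero_mul])]
  rw [← Finset.sum_range_reflect]
  apply Finset.sum_congr rfl
  intro u hu
  have hu' : u ≤ m := by simpa [Nat.lt_succ_iff] using hu
  have h1 : m + 1 - 1 - u = m - u := by omega
  rw [h1, Nat.choose_symm hu']
  congr 1
  congr 1
  omega

lemma my_inner (a b j : ℕ) :
    ∑ w ∈ range (a+1), a.choose w * b.choose w * w.choose j
      = a.choose j * (a - j + b).choose a := by
  rcases le_or_gt j a with hj | hj
  · have htr : ∑ w ∈ Finset.Ico j (a+1), a.choose w * b.choose w * w.choose j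
        = ∑ w ∈ range (a+1), a.choose w * b.choose w * w.choose j := by
      rw [Finset.range_eq_Ico]
      apply Finset.sum_subset (Finset.Ico_subset_Ico (Nat.zero_le j) le_rfl)
      intro w hw hw'
      have : w < j := by simp only [mem_Ico] at *; omega
      rw [Nat.choose_eq_zero_of_lt this, mul_zero]
    rw [← htr, Finset.sum_Ico_eq_sum_range]
    have hr : a + 1 - j = a - j + 1 := by omega
    rw [hr]
    have step : ∀ u ∈ range (a - j + 1),
        a.choose (j+u) * b.choose (j+u) * (j+u).choose j
          = a.choose j * ((a-j).choose u * b.choose (j+u)) := by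
      intro u hu
      have hu' : u ≤ a - j := by simpa [Nat.lt_succ_iff] using hu
      have h2 : j + u ≤ a := by omega
      have := Nat.choose_mul (n := a) (Nat.le_add_right j u)
      have h3 : j + u - j = u := by omega
      rw [h3] at this
      calc a.choose (j+u) * b.choose (j+u) * (j+u).choose j
          = a.choose (j+u) * (j+u).choose j * b.choose (j+u) := by ring
        _ = a.choose j * (a-j).choose u * b.choose (j+u) := by rw [this]
        _ = _ := by ring
    rw [Finset.sum_congr rfl step, ← Finset.mul_sum, my_vand2]
    congr 2
    omega
  · rw [Nat.choose_eq_zero_of_lt hj, zero_mul]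
    apply Finset.sum_eq_zero
    intro w hw
    have : w < j := by simp only [mem_range] at hw; omega
    rw [Nat.choose_eq_zero_of_lt this, mul_zero]
lemma my_key (a b c : ℕ) :
    ∑ w ∈ range (a+1), a.choose w * b.choose w * (c+w).choose (a+b)
      = c.choose a * c.choose b := by
  have expand : ∀ w : ℕ, (c+w).choose (a+b)
      = ∑ j ∈ range (a+b+1), c.choose (a+b-j) * w.choose j := by
    intro w
    rw [Nat.add_choose_eq, Finset.Nat.sum_antidiagonal_eq_sum_range_succ_mk,
      ← Finset.sum_range_reflect]
    apply Finset.sum_congr rfl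
    intro j hj
    have hj' : j ≤ a + b := by simpa [Nat.lt_succ_iff] using hj
    have h1 : a+b+1-1-j = a+b-j := by omega
    have h2 : a+b-(a+b-j) = j := by omega
    rw [h1, h2]
  calc ∑ w ∈ range (a+1), a.choose w * b.choose w * (c+w).choose (a+b)
      = ∑ w ∈ range (a+1), ∑ j ∈ range (a+b+1),
          c.choose (a+b-j) * (a.choose w * b.choose w * w.choose j) := by
        apply Finset.sum_congr rfl
        intro w _
        rw [expand w, Finset.mul_sum]
        apply Finset.sum_congr rfl
        intro j _
        ring
    _ = ∑ j ∈ range (a+b+1), c.choose (a+b-j) *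
          ∑ w ∈ range (a+1), a.choose w * b.choose w * w.choose j := by
        rw [Finset.sum_comm]
        simp [Finset.mul_sum]
    _ = ∑ j ∈ range (a+b+1), c.choose (a+b-j) * (a.choose j * (a-j+b).choose a) := by
        simp [my_inner]
    _ = ∑ j ∈ range (b+1), c.choose (a+b-j) * (a.choose j * (a-j+b).choose a) := by
        symm
        apply Finset.sum_subset (Finset.range_subset_range.2 (by omega))
        intro j hj hj'
        have hbj : b < j := by simp only [mem_range] at hj'; omega
        rcases le_or_gt j a with h | h
        · rw [Nat.choose_eq_zero_of_lt (by omega : a-j+b < a)]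
          simp
        · rw [Nat.choose_eq_zero_of_lt h]
          simp
    _ = ∑ j ∈ range (b+1), c.choose a * (a.choose j * (c-a).choose (b-j)) := by
        apply Finset.sum_congr rfl
        intro j hj
        have hjb : j ≤ b := by simpa [Nat.lt_succ_iff] using hj
        rcases le_or_gt j a with h | h
        · have h1 : a-j+b = a+b-j := by omega
          rw [h1]
          rcases le_or_gt (a+b-j) c with h2 | h2
          · have h3 := Nat.choose_mul (n := c) (by omega : a ≤ a+b-j)
            have h4 : a+b-j-a = b-j := by omega
            rw [h4] at h3
            calc c.choose (a+b-j) * (a.choose j * (a+b-j).choose a)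
                = c.choose (a+b-j) * (a+b-j).choose a * a.choose j := by ring
              _ = c.choose a * (c-a).choose (b-j) * a.choose j := by rw [h3]
              _ = _ := by ring
          · rw [Nat.choose_eq_zero_of_lt h2, zero_mul]
            rcases le_or_gt a c with h4 | h4
            · rw [Nat.choose_eq_zero_of_lt (by omega : c-a < b-j)]
              simp
            · rw [Nat.choose_eq_zero_of_lt h4]
              simp
        · rw [Nat.choose_eq_zero_of_lt h]
          simp
    _ = c.choose a * ∑ j ∈ range (b+1), a.choose j * (c-a).choose (b-j) := by
        rw [Finset.mul_sum]
    _ = c.choose a * c.choose b := by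
        rcases le_or_gt a c with h | h
        · congr 1
          have := Nat.add_choose_eq a (c-a) b
          rw [Finset.Nat.sum_antidiagonal_eq_sum_range_succ_mk] at this
          rw [← this]
          congr 1
          omega
        · rw [Nat.choose_eq_zero_of_lt h]
          simp

section ChainEquiv

variable {α : Type*} [LinearOrder α] [Fintype α] [DecidableEq α]

noncomputable def myChainEquiv (n a : ℕ) (p : α → Prop) [DecidablePred p] :
    {x : Fin n → α // StrictMono x ∧ (Finset.univ.filter fun i => p (x i)).card = a}
    ≃ {s : Finset α // s.card = n ∧ (s.filter p).card = a} where
  toFun x := ⟨Finset.univ.image x.1, by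
    constructor
    · rw [Finset.card_image_of_injective _ x.2.1.injective, card_univ, Fintype.card_fin]
    · rw [Finset.filter_image, Finset.card_image_of_injective _ x.2.1.injective]
      exact x.2.2⟩
  invFun s := ⟨s.1.orderEmbOfFin s.2.1, by
    have himg : Finset.univ.image (s.1.orderEmbOfFin s.2.1) = s.1 := by
      apply Finset.coe_injective
      simp only [Finset.coe_image, Finset.coe_univ, Set.image_univ]
      exact Finset.range_orderEmbOfFin _ _
    refine ⟨(s.1.orderEmbOfFin s.2.1).strictMono, ?_⟩
    have := s.2.2
    rw [← himg, Finset.filter_image,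
      Finset.card_image_of_injective _ (s.1.orderEmbOfFin s.2.1).injective] at this
    exact this⟩
  left_inv x := by
    apply Subtype.ext
    symm
    exact Finset.orderEmbOfFin_unique _ (fun i => Finset.mem_image_of_mem _ (mem_univ i)) x.2.1
  right_inv s := by
    apply Subtype.ext
    apply Finset.coe_injective
    simp only [Finset.coe_image, Finset.coe_univ, Set.image_univ]
    exact Finset.range_orderEmbOfFin _ _

end ChainEquiv

section Split

variable {c : ℕ}

private def mkU (R S : Finset (Fin c)) : Finset (Fin c ×ₗ Bool) :=
  (R.image fun v => toLex (v, false)) ∪ (S.image fun v => toLex (v, true))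

lemma mem_mkU (R S : Finset (Fin c)) (q : Fin c ×ₗ Bool) :
    q ∈ mkU R S
      ↔ ((ofLex q).1 ∈ R ∧ (ofLex q).2 = false) ∨ ((ofLex q).1 ∈ S ∧ (ofLex q).2 = true) := by
  simp only [mkU, Finset.mem_union, Finset.mem_image]
  constructor
  · rintro (⟨v, hv, rfl⟩ | ⟨v, hv, rfl⟩) <;> simp [hv]
  · rintro (⟨h1, h2⟩ | ⟨h1, h2⟩)
    · left; exact ⟨(ofLex q).1, h1, by rw [← h2, Prod.mk.eta, toLex_ofLex]⟩
    · right; exact ⟨(ofLex q).1, h1, by rw [← h2, Prod.mk.eta, toLex_ofLex]⟩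

lemma injf : Function.Injective (fun v : Fin c => toLex (v, false)) := by
  intro x y h
  simpa using congrArg (fun z => (ofLex z).1) h

lemma injt : Function.Injective (fun v : Fin c => toLex (v, true)) := by
  intro x y h
  simpa using congrArg (fun z => (ofLex z).1) h

lemma filter_mkU_false (R S : Finset (Fin c)) :
    ((mkU R S).filter fun q => (ofLex q).2 = false) = R.image fun v => toLex (v, false) := by
  ext q
  simp only [Finset.mem_filter, mem_mkU, Finset.mem_image]
  constructor
  · rintro ⟨(⟨h1, h2⟩ | ⟨h1, h2⟩), h3⟩
    · exact ⟨(ofLex q).1, h1, by rw [← h2, Prod.mk.eta, toLex_ofLex]⟩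
    · rw [h2] at h3; exact absurd h3 (by simp)
  · rintro ⟨v, hv, rfl⟩
    exact ⟨Or.inl ⟨by simpa using hv, rfl⟩, rfl⟩

lemma filter_mkU_true (R S : Finset (Fin c)) :
    ((mkU R S).filter fun q => (ofLex q).2 = true) = S.image fun v => toLex (v, true) := by
  ext q
  simp only [Finset.mem_filter, mem_mkU, Finset.mem_image]
  constructor
  · rintro ⟨(⟨h1, h2⟩ | ⟨h1, h2⟩), h3⟩
    · rw [h2] at h3; exact absurd h3 (by simp)
    · exact ⟨(ofLex q).1, h1, by rw [← h2, Prod.mk.eta, toLex_ofLex]⟩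
  · rintro ⟨v, hv, rfl⟩
    exact ⟨Or.inr ⟨by simpa using hv, rfl⟩, rfl⟩

lemma card_mkU (R S : Finset (Fin c)) : (mkU R S).card = R.card + S.card := by
  have hdisj : Disjoint (R.image fun v : Fin c => toLex (v, false))
      (S.image fun v : Fin c => toLex (v, true)) := by
    rw [Finset.disjoint_left]
    rintro q hq hq'
    simp only [Finset.mem_image] at hq hq'
    obtain ⟨v, _, rfl⟩ := hq
    obtain ⟨w, _, h⟩ := hq'
    exact absurd (congrArg (fun z => (ofLex z).2) h) (by simp)
  rw [mkU, Finset.card_union_of_disjoint hdisj, Finset.card_image_of_injective _ injf,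
    Finset.card_image_of_injective _ injt]

lemma injOn_fst (s : Finset (Fin c ×ₗ Bool)) (e : Bool) :
    Set.InjOn (fun q : Fin c ×ₗ Bool => (ofLex q).1)
      (↑(s.filter fun q => (ofLex q).2 = e) : Set (Fin c ×ₗ Bool)) := by
  intro x hx y hy hxy
  simp only [Finset.coe_filter, Set.mem_setOf_eq] at hx hy
  exact toLex.symm.injective (Prod.ext hxy (hx.2.trans hy.2.symm))

def mySplitEquiv (a b : ℕ) :
    {s : Finset (Fin c ×ₗ Bool) // s.card = a + b ∧
        (s.filter fun q => (ofLex q).2 = false).card = a}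
    ≃ {R : Finset (Fin c) // R.card = a} × {S : Finset (Fin c) // S.card = b} where
  toFun s :=
    (⟨(s.1.filter fun q => (ofLex q).2 = false).image fun q => (ofLex q).1, by
        rw [Finset.card_image_of_injOn (injOn_fst s.1 false), s.2.2]⟩,
     ⟨(s.1.filter fun q => (ofLex q).2 = true).image fun q => (ofLex q).1, by
        rw [Finset.card_image_of_injOn (injOn_fst s.1 true)]
        have h := Finset.card_filter_add_card_filter_not
          (s := s.1) (fun q => (ofLex q).2 = false)
        have he : (s.1.filter fun q => ¬ (ofLex q).2 = false)
            = (s.1.filter fun q => (ofLex q).2 = true) := by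
          apply Finset.filter_congr
          intro q _
          simp
        rw [he, s.2.2, s.2.1] at h
        omega⟩)
  invFun RS := ⟨mkU RS.1.1 RS.2.1, by
    constructor
    · rw [card_mkU, RS.1.2, RS.2.2]
    · rw [filter_mkU_false, Finset.card_image_of_injective _ injf, RS.1.2]⟩
  left_inv s := by
    apply Subtype.ext
    ext q
    rw [mem_mkU]
    constructor
    · rintro (⟨h1, h2⟩ | ⟨h1, h2⟩) <;>
      · simp only [Finset.mem_image, Finset.mem_filter] at h1
        obtain ⟨r, ⟨hr, hr2⟩, hr3⟩ := h1
        have : q = r := toLex.symm.injective (Prod.ext hr3.symm (h2.trans hr2.symm))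
        rwa [this]
    · intro hq
      cases hsnd : (ofLex q).2 with
      | false =>
        left
        refine ⟨?_, rfl⟩
        simp only [Finset.mem_image, Finset.mem_filter]
        exact ⟨q, ⟨hq, hsnd⟩, rfl⟩
      | true =>
        right
        refine ⟨?_, rfl⟩
        simp only [Finset.mem_image, Finset.mem_filter]
        exact ⟨q, ⟨hq, hsnd⟩, rfl⟩
  right_inv RS := by
    have himg : ∀ (T : Finset (Fin c)) (e : Bool),
        (T.image fun v : Fin c => toLex (v, e)).image (fun q => (ofLex q).1) = T := by
      intro T e
      rw [Finset.image_image]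
      exact Finset.image_id
    refine Prod.ext ?_ ?_
    · apply Subtype.ext
      show ((mkU RS.1.1 RS.2.1).filter fun q => (ofLex q).2 = false).image _ = _
      rw [filter_mkU_false, himg]
    · apply Subtype.ext
      show ((mkU RS.1.1 RS.2.1).filter fun q => (ofLex q).2 = true).image _ = _
      rw [filter_mkU_true, himg]

end Split

def mySigmaEquiv (a b c : ℕ) :
    {t : Σ w : ℕ, Finset (Fin a) × Finset (Fin b) × Finset (Fin (c + w)) //
        t.2.1.card = t.1 ∧ t.2.2.1.card = t.1 ∧ t.2.2.2.card = a + b}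
    ≃ Σ w : Fin (a+1), {A : Finset (Fin a) // A.card = w.1} × {B : Finset (Fin b) // B.card = w.1}
        × {C : Finset (Fin (c + w.1)) // C.card = a + b} where
  toFun t := ⟨⟨t.1.1, by
      have h1 : t.1.2.1.card ≤ a := by
        simpa using Finset.card_le_card (Finset.subset_univ t.1.2.1)
      have := t.2.1
      omega⟩,
    ⟨t.1.2.1, t.2.1⟩, ⟨t.1.2.2.1, t.2.2.1⟩, ⟨t.1.2.2.2, t.2.2.2⟩⟩
  invFun s := ⟨⟨s.1.1, s.2.1.1, s.2.2.1.1, s.2.2.2.1⟩, s.2.1.2, s.2.2.1.2, s.2.2.2.2⟩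
  left_inv t := by
    obtain ⟨⟨w, A, B, C⟩, h1, h2, h3⟩ := t
    rfl
  right_inv s := by
    obtain ⟨⟨w, hw⟩, ⟨A, hA⟩, ⟨B, hB⟩, ⟨C, hC⟩⟩ := s
    rfl


/-- The number of chains of type `(a,b)` of colored integers in `Fin c × Bool`
(ordered lexicographically, values first, red = `false` < blue = `true`) equals the
number of 4-tuples `(w, A, B, C)` with `A ⊆ [a]`, `|A| = w`, `B ⊆ [b]`, `|B| = w`,
`C ⊆ [c+w]`, `|C| = a+b`. -/
theorem stmt6 (a b c : ℕ) :
    Nat.card {x : Fin (a + b) → Fin c ×ₗ Bool //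
        StrictMono x ∧
          (Finset.univ.filter fun i => (ofLex (x i)).2 = false).card = a}
    = Nat.card {t : Σ w : ℕ, Finset (Fin a) × Finset (Fin b) × Finset (Fin (c + w)) //
        t.2.1.card = t.1 ∧ t.2.2.1.card = t.1 ∧ t.2.2.2.card = a + b} := by
  have hL : Nat.card {x : Fin (a + b) → Fin c ×ₗ Bool //
        StrictMono x ∧
          (Finset.univ.filter fun i => (ofLex (x i)).2 = false).card = a}
      = c.choose a * c.choose b := by
    rw [Nat.card_congr (myChainEquiv (a+b) a (fun q : Fin c ×ₗ Bool => (ofLex q).2 = false)),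
      Nat.card_congr (mySplitEquiv a b), Nat.card_prod, Nat.card_eq_fintype_card,
      Nat.card_eq_fintype_card, Fintype.card_finset_len, Fintype.card_finset_len,
      Fintype.card_fin]
  have hR : Nat.card {t : Σ w : ℕ, Finset (Fin a) × Finset (Fin b) × Finset (Fin (c + w)) //
        t.2.1.card = t.1 ∧ t.2.2.1.card = t.1 ∧ t.2.2.2.card = a + b}
      = ∑ w ∈ range (a+1), a.choose w * b.choose w * (c+w).choose (a+b) := by
    rw [Nat.card_congr (mySigmaEquiv a b c), Nat.card_eq_fintype_card, Fintype.card_sigma]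
    rw [← Fin.sum_univ_eq_sum_range
      (fun w => a.choose w * b.choose w * (c+w).choose (a+b)) (a+1)]
    apply Finset.sum_congr rfl
    intro w _
    rw [Fintype.card_prod, Fintype.card_prod, Fintype.card_finset_len, Fintype.card_finset_len,
      Fintype.card_finset_len, Fintype.card_fin, Fintype.card_fin, Fintype.card_fin, mul_assoc]
  rw [hL, hR, my_key]
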